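/- arXiv:2108.11549 — 2 statements merged into one kernel-verified Lean document; each statement's English description precedes it below -/
import Mathlib

section
/- Update affordability (cosine, dissimilar, main case): Let ε ∈ (0,1], ρ ∈ (0,1), and let a, d[u], d[v] be positive reals with a/√(d[u]d[v]) ≤ (1 + ρ/2)ε and min{d[u],d[v]} ≥ 0.81ε²·max{d[u],d[v]}. Then for any nonnegative integers k ≤ 0.45ρε²·max{d[u],d[v]} and 0 ≤ t ≤ k, (a + k)/√((d[u]+t)(d[v]+k−t)) ≤ (1+ρ)ε. -/
/-- Update affordability (cosine, dissimilar, main case). -/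
theorem cosine_dissimilar_affordability_main (ε ρ a du dv : ℝ)
    (hε : 0 < ε ∧ ε ≤ 1) (hρ : 0 < ρ ∧ ρ < 1)
    (ha : 0 < a) (hdu : 0 < du) (hdv : 0 < dv)
    (hsim : a / Real.sqrt (du * dv) ≤ (1 + ρ / 2) * ε)
    (hgap : min du dv ≥ 0.81 * ε ^ 2 * max du dv) :
    ∀ k t : ℕ, (k : ℝ) ≤ 0.45 * ρ * ε ^ 2 * max du dv → t ≤ k →
      (a + (k : ℝ)) / Real.sqrt ((du + (t : ℝ)) * (dv + ((k : ℝ) - (t : ℝ))))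
        ≤ (1 + ρ) * ε := by
  obtain ⟨hε0, hε1⟩ := hε
  obtain ⟨hρ0, hρ1⟩ := hρ
  intro k t hk htk
  have htk' : (t : ℝ) ≤ (k : ℝ) := by exact_mod_cast htk
  have hS : (0:ℝ) < Real.sqrt (du * dv) := Real.sqrt_pos.mpr (by positivity)
  have hmax : (0:ℝ) < max du dv := lt_max_of_lt_left hdu
  -- sqrt(du*dv) ≥ 0.9 ε max
  have hprod : du * dv ≥ (0.9 * ε * max du dv) ^ 2 := by
    have h1 : du * dv ≥ min du dv * max du dv := by
      rcases le_total du dv with h | h <;>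
        simp [min_eq_left, min_eq_right, max_eq_left, max_eq_right, h, mul_comm] <;> nlinarith
    nlinarith [hgap, sq_nonneg ε, sq_nonneg (max du dv)]
  have hSge : Real.sqrt (du * dv) ≥ 0.9 * ε * max du dv := by
    have := Real.sqrt_le_sqrt (le_of_eq rfl : du * dv ≤ du * dv)
    calc 0.9 * ε * max du dv = Real.sqrt ((0.9 * ε * max du dv) ^ 2) := by
          rw [Real.sqrt_sq (by positivity)]
      _ ≤ Real.sqrt (du * dv) := Real.sqrt_le_sqrt hprod
  -- k / S ≤ ρ/2 * ε
  have hkS : (k : ℝ) / Real.sqrt (du * dv) ≤ (ρ / 2) * ε := by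
    rw [div_le_iff₀ hS]
    calc (k : ℝ) ≤ 0.45 * ρ * ε ^ 2 * max du dv := hk
      _ = (ρ / 2) * ε * (0.9 * ε * max du dv) := by ring
      _ ≤ (ρ / 2) * ε * Real.sqrt (du * dv) := by
          apply mul_le_mul_of_nonneg_left hSge (by positivity)
  -- denominator monotonicity
  have hden : Real.sqrt (du * dv) ≤ Real.sqrt ((du + (t : ℝ)) * (dv + ((k : ℝ) - (t : ℝ)))) := by
    apply Real.sqrt_le_sqrt
    have ht0 : (0:ℝ) ≤ (t : ℝ) := Nat.cast_nonneg t
    nlinarith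
  have hden0 : (0:ℝ) < Real.sqrt ((du + (t : ℝ)) * (dv + ((k : ℝ) - (t : ℝ)))) :=
    lt_of_lt_of_le hS hden
  have hnum : (0:ℝ) ≤ a + (k : ℝ) := by positivity
  calc (a + (k : ℝ)) / Real.sqrt ((du + (t : ℝ)) * (dv + ((k : ℝ) - (t : ℝ))))
      ≤ (a + (k : ℝ)) / Real.sqrt (du * dv) := by
        apply div_le_div_of_nonneg_left hnum hS hden
    _ = a / Real.sqrt (du * dv) + (k : ℝ) / Real.sqrt (du * dv) := by ring
    _ ≤ (1 + ρ / 2) * ε + (ρ / 2) * ε := add_le_add hsim hkS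
    _ = (1 + ρ) * ε := by ring
end

section
/- Update affordability (cosine, similar case): Let ε ∈ (0,1], ρ ∈ (0,1), and let a, d[u], d[v] be positive reals with a/√(d[u]d[v]) ≥ (1 − ρ/2)ε. Then for any nonnegative integers k ≤ (ρε/2)·min{d[u],d[v]} and 0 ≤ t ≤ min{k, d[u]−1} with k−t ≤ d[v]−1, (a − k)/√((d[u]−t)(d[v]−k+t)) ≥ (1−ρ)ε (assuming a ≥ k). -/
/-- Update affordability (cosine, similar case): the similar label remains
    valid after k ≤ (ρε/2)·d_min affecting deletions. -/
theorem cosine_similar_affordability (ε ρ a du dv : ℝ)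
    (hε : 0 < ε ∧ ε ≤ 1) (hρ : 0 < ρ ∧ ρ < 1)
    (ha : 0 < a) (hdu : 0 < du) (hdv : 0 < dv)
    (hsim : a / Real.sqrt (du * dv) ≥ (1 - ρ / 2) * ε) :
    ∀ k t : ℕ, (k : ℝ) ≤ ρ * ε / 2 * min du dv → t ≤ k →
      (t : ℝ) ≤ du - 1 → (k : ℝ) - (t : ℝ) ≤ dv - 1 → (k : ℝ) ≤ a →
      (a - (k : ℝ)) / Real.sqrt ((du - (t : ℝ)) * (dv - ((k : ℝ) - (t : ℝ))))
        ≥ (1 - ρ) * ε := by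
  obtain ⟨hε0, hε1⟩ := hε
  obtain ⟨hρ0, hρ1⟩ := hρ
  intro k t hk htk ht hkt hka
  have hm0 : 0 < min du dv := lt_min hdu hdv
  have hB0 : 0 < Real.sqrt (du * dv) := Real.sqrt_pos.mpr (mul_pos hdu hdv)
  have hmB : min du dv ≤ Real.sqrt (du * dv) := by
    have h1 : min du dv ≤ du := min_le_left _ _
    have h2 : min du dv ≤ dv := min_le_right _ _
    rw [Real.le_sqrt hm0.le] <;> nlinarith
  have ht0 : (0:ℝ) ≤ t := Nat.cast_nonneg t
  have hkt0 : (0:ℝ) ≤ (k:ℝ) - t := by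
    have : (t:ℝ) ≤ (k:ℝ) := Nat.cast_le.mpr htk
    linarith
  have hdut : 0 < du - (t:ℝ) := by linarith
  have hdvkt : 0 < dv - ((k:ℝ) - t) := by linarith
  have hprod : (du - (t:ℝ)) * (dv - ((k:ℝ) - t)) ≤ du * dv := by nlinarith
  have hS0 : 0 < Real.sqrt ((du - (t:ℝ)) * (dv - ((k:ℝ) - t))) :=
    Real.sqrt_pos.mpr (by positivity)
  have hSB : Real.sqrt ((du - (t:ℝ)) * (dv - ((k:ℝ) - t))) ≤ Real.sqrt (du * dv) :=
    Real.sqrt_le_sqrt hprod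
  have hnum : 0 ≤ a - (k:ℝ) := by linarith
  have step1 : (a - (k:ℝ)) / Real.sqrt (du * dv)
      ≤ (a - (k:ℝ)) / Real.sqrt ((du - (t:ℝ)) * (dv - ((k:ℝ) - t))) := by
    gcongr
  have hkB : (k:ℝ) / Real.sqrt (du * dv) ≤ ρ * ε / 2 := by
    have : (k:ℝ) / Real.sqrt (du * dv) ≤ (ρ * ε / 2 * min du dv) / min du dv :=
      div_le_div₀ (by positivity) hk hm0 hmB
    rwa [mul_div_assoc, div_self hm0.ne', mul_one] at this
  have haB : (1 - ρ / 2) * ε ≤ a / Real.sqrt (du * dv) := hsim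
  have : (1 - ρ) * ε ≤ (a - (k:ℝ)) / Real.sqrt (du * dv) := by
    rw [sub_div]
    nlinarith
  linarith
end
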